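/- For all even integers k ≤ 0 and all i ≥ 1, the quantity v_2(2^{2i} · (−k+12i+2)!·(−k+6i)! / ((−k+8i+2)!·(−k+8i−2)!·(−k+12i))) equals the sum over even j in {8i+4,...,12i−2} ∪ {12i+2} of v_2(k−j) minus the sum over even j in {6i+2,...,8i−2} of v_2(k−j), plus 2i. -/

import Mathlib

open Finset


lemma fact_val (a b : ℕ) (h : a ≤ b) :
    (padicValNat 2 (Nat.factorial b) : ℤ) - padicValNat 2 (Nat.factorial a)
      = ∑ m ∈ Finset.Ioc a b, (padicValNat 2 m : ℤ) := by
  induction b with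
  | zero =>
    interval_cases a
    simp
  | succ b ih =>
    rcases Nat.lt_or_ge a (b+1) with hlt | hge
    · have ha : a ≤ b := by omega
      rw [Finset.sum_Ioc_succ_top ha, ← ih ha, Nat.factorial_succ,
        padicValNat.mul (by omega) (Nat.factorial_ne_zero b)]
      push_cast
      ring
    · have : a = b + 1 := by omega
      subst this
      simp

lemma shift_val (n a b : ℕ) (hn : Even n) :
    (∑ m ∈ Finset.Ioc (n + a) (n + b), (padicValNat 2 m : ℤ))
      = ∑ j ∈ (Finset.Ioc a b).filter (fun j => Even j), (padicValNat 2 (n + j) : ℤ) := by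
  rw [Finset.sum_filter_of_ne (fun x hx hne => ?_), ← Finset.map_add_left_Ioc, Finset.sum_map]
  · rfl
  · by_contra hodd
    apply hne
    have : ¬ (2 ∣ (n + x)) := by
      rcases hn with ⟨m, hm⟩
      simp only [Nat.even_iff] at hodd ⊢
      omega
    simp [padicValNat.eq_zero_of_not_dvd this]



/-- For all even integers `k ≤ 0` and all `i ≥ 1`,
`v₂(2^{2i}·(-k+12i+2)!·(-k+6i)! / ((-k+8i+2)!·(-k+8i-2)!·(-k+12i)))`
equals `Σ_{even j ∈ [8i+4,12i-2] ∪ {12i+2}} v₂(k-j) - Σ_{even j ∈ [6i+2,8i-2]} v₂(k-j) + 2i`. -/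
theorem stmt_12 (i : ℕ) (hi : 1 ≤ i) (k : ℤ) (hk : k ≤ 0) (hke : Even k) :
    padicValRat 2
        (((2 : ℚ) ^ (2 * i)
            * ((-k + 12 * (i : ℤ) + 2).toNat.factorial : ℚ)
            * ((-k + 6 * (i : ℤ)).toNat.factorial : ℚ))
          / ((((-k + 8 * (i : ℤ) + 2).toNat.factorial : ℚ)
              * ((-k + 8 * (i : ℤ) - 2).toNat.factorial : ℚ))
            * ((-k + 12 * (i : ℤ) : ℤ) : ℚ)))
      = (∑ j ∈ insert (12 * i + 2)
            ((Finset.Icc (8 * i + 4) (12 * i - 2)).filter (fun j => Even j)),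
          (padicValInt 2 (k - (j : ℤ)) : ℤ))
        - (∑ j ∈ (Finset.Icc (6 * i + 2) (8 * i - 2)).filter (fun j => Even j),
          (padicValInt 2 (k - (j : ℤ)) : ℤ))
        + 2 * (i : ℤ) := by
  obtain ⟨n, rfl⟩ : ∃ n : ℕ, k = -(n : ℤ) := ⟨(-k).toNat, by omega⟩
  have hn : Even n := by simpa using hke
  have t1 : (-(-(n:ℤ)) + 12 * (i:ℤ) + 2).toNat = n + (12*i + 2) := by omega
  have t2 : (-(-(n:ℤ)) + 6 * (i:ℤ)).toNat = n + 6*i := by omega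
  have t3 : (-(-(n:ℤ)) + 8 * (i:ℤ) + 2).toNat = n + (8*i + 2) := by omega
  have t4 : (-(-(n:ℤ)) + 8 * (i:ℤ) - 2).toNat = n + (8*i - 2) := by omega
  have t5 : ((-(-(n:ℤ)) + 12 * (i:ℤ) : ℤ) : ℚ) = ((n + 12*i : ℕ) : ℚ) := by
    push_cast; ring
  rw [t1, t2, t3, t4, t5]
  -- nonzeroness
  have fne : ∀ m : ℕ, ((Nat.factorial m : ℚ)) ≠ 0 :=
    fun m => Nat.cast_ne_zero.2 (Nat.factorial_ne_zero m)
  have Ene : ((n + 12*i : ℕ) : ℚ) ≠ 0 := Nat.cast_ne_zero.2 (by omega)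
  have p2 : (2:ℚ)^(2*i) = ((2^(2*i) : ℕ) : ℚ) := by push_cast; ring
  rw [p2, padicValRat.div (by positivity) (mul_ne_zero (mul_ne_zero (fne _) (fne _)) Ene),
    padicValRat.mul (mul_ne_zero (Nat.cast_ne_zero.2 (by positivity)) (fne _)) (fne _),
    padicValRat.mul (Nat.cast_ne_zero.2 (by positivity)) (fne _),
    padicValRat.mul (mul_ne_zero (fne _) (fne _)) Ene,
    padicValRat.mul (fne _) (fne _)]
  simp only [padicValRat.of_nat, padicValNat.prime_pow]
  -- convert RHS terms
  have hconv : ∀ j ∈ insert (12 * i + 2)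
      ((Finset.Icc (8 * i + 4) (12 * i - 2)).filter (fun j => Even j)),
      (padicValInt 2 (-(n:ℤ) - (j : ℤ)) : ℤ) = (padicValNat 2 (n + j) : ℤ) := by
    intro j _
    rw [padicValInt]
    congr 2
    omega
  have hconv2 : ∀ j ∈ (Finset.Icc (6 * i + 2) (8 * i - 2)).filter (fun j => Even j),
      (padicValInt 2 (-(n:ℤ) - (j : ℤ)) : ℤ) = (padicValNat 2 (n + j) : ℤ) := by
    intro j _
    rw [padicValInt]
    congr 2
    omega
  rw [Finset.sum_congr rfl hconv, Finset.sum_congr rfl hconv2]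
  -- factorial ratio identities
  have h1 := fact_val (n + (8*i+2)) (n + (12*i+2)) (by omega)
  have h2 := fact_val (n + 6*i) (n + (8*i-2)) (by omega)
  rw [shift_val n _ _ hn] at h1 h2
  -- set identities
  have hs1 : (Finset.Ioc (8*i+2) (12*i+2)).filter (fun j => Even j)
      = insert (12*i) (insert (12 * i + 2)
          ((Finset.Icc (8 * i + 4) (12 * i - 2)).filter (fun j => Even j))) := by
    ext x
    simp only [Finset.mem_filter, Finset.mem_Ioc, Finset.mem_Icc, Finset.mem_insert,
      Nat.even_iff]
    omega
  have hs2 : (Finset.Ioc (6*i) (8*i-2)).filter (fun j => Even j)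
      = (Finset.Icc (6 * i + 2) (8 * i - 2)).filter (fun j => Even j) := by
    ext x
    simp only [Finset.mem_filter, Finset.mem_Ioc, Finset.mem_Icc, Nat.even_iff]
    omega
  rw [hs1] at h1
  rw [hs2] at h2
  rw [Finset.sum_insert (by
    simp only [Finset.mem_insert, Finset.mem_filter, Finset.mem_Icc]
    push_neg
    exact ⟨by omega, fun h => absurd h.2 (by omega)⟩)] at h1
  omega
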